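/- Let u be a positive continuous function on [0,∞) with lim_{r→∞} log u(r)/√r = ∞ that is (log, x²)-convex. Then lim_{n→∞} (1/(ℓ_u(n)(n!)²))^{1/n} = 0, where ℓ_u(t) = inf_{r>0} u(r)/r^t; consequently the series L_u^#(r) = Σ_{n=0}^∞ r^n/(ℓ_u(n)(n!)²) defines an entire function. -/

import Mathlib

noncomputable def ell (u : ℝ → ℝ) (t : ℝ) : ℝ :=
  ⨅ r : {r : ℝ // 0 < r}, u r / (r : ℝ) ^ t

open Real Filter

private lemma log_ineq {s B : ℝ} (hs : 0 < s) (hB : 0 < B) {n : ℕ} (hn : 1 ≤ n) :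
    2*n - 2*n*(Real.log n - Real.log B) + 2*n*Real.log s ≤ 2*B*s := by
  have hn' : (0:ℝ) < n := by exact_mod_cast hn
  have h := Real.log_le_sub_one_of_pos (show 0 < s*B/n by positivity)
  rw [Real.log_div (by positivity) hn'.ne', Real.log_mul hs.ne' hB.ne'] at h
  have h2 : 2*(n:ℝ)*(Real.log s + Real.log B - Real.log n) ≤ 2*n*(s*B/n - 1) :=
    mul_le_mul_of_nonneg_left h (by positivity)
  have h3 : 2*(n:ℝ)*(s*B/n - 1) = 2*B*s - 2*n := by field_simp
  rw [h3] at h2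
  linarith

private lemma key_bound (u : ℝ → ℝ)
    (hpos : ∀ r ≥ 0, 0 < u r)
    (hcont : ContinuousOn u (Set.Ici 0))
    (hlim : Filter.Tendsto (fun r => Real.log (u r) / Real.sqrt r)
      Filter.atTop Filter.atTop)
    (C : ℝ) :
    ∀ᶠ n : ℕ in atTop, C ^ n ≤ ell u n * ((n.factorial : ℝ)) ^ 2 := by
  haveI : Nonempty {r : ℝ // 0 < r} := ⟨⟨1, one_pos⟩⟩
  set C' : ℝ := max |C| 1 with hC'def
  have hC1 : 1 ≤ C' := le_max_right _ _
  have hC0 : (0:ℝ) < C' := lt_of_lt_of_le one_pos hC1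
  set B : ℝ := Real.sqrt C' with hBdef
  have hB0 : 0 < B := Real.sqrt_pos.2 hC0
  have hBB : B ^ 2 = C' := Real.sq_sqrt hC0.le
  obtain ⟨R₀, hR₀⟩ := (Filter.eventually_atTop).1 (hlim.eventually_ge_atTop (2*B))
  set R : ℝ := max R₀ 1 with hRdef
  have hR1 : 1 ≤ R := le_max_right _ _
  have hR0 : (0:ℝ) < R := lt_of_lt_of_le one_pos hR1
  obtain ⟨x₀, hx₀mem, hx₀min⟩ := isCompact_Icc.exists_isMinOn
    (Set.nonempty_Icc.2 (le_trans zero_le_one hR1))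
    (hcont.mono Set.Icc_subset_Ici_self)
  set m : ℝ := u x₀ with hmdef
  have hm : 0 < m := hpos x₀ hx₀mem.1
  -- pointwise lower bound for ell
  have hell : ∀ n : ℕ, 1 ≤ n →
      min (m / R ^ n) (Real.exp (2*n - 2*n*(Real.log n - Real.log B))) ≤ ell u n := by
    intro n hn
    unfold ell
    apply le_ciInf
    rintro ⟨r, hr⟩
    simp only
    rcases le_total r R with hcase | hcase
    · refine le_trans (min_le_left _ _) ?_
      rw [Real.rpow_natCast]
      have h1 : m ≤ u r := isMinOn_iff.1 hx₀min r ⟨hr.le, hcase⟩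
      exact div_le_div₀ (hpos r hr.le).le h1 (pow_pos hr n)
        (pow_le_pow_left₀ hr.le hcase n)
    · refine le_trans (min_le_right _ _) ?_
      have hs : 0 < Real.sqrt r := Real.sqrt_pos.2 hr
      have hlog : 2*B*Real.sqrt r ≤ Real.log (u r) := by
        have h := hR₀ r (le_trans (le_max_left _ _) hcase)
        rwa [le_div_iff₀ hs] at h
      have hur : Real.exp (2*B*Real.sqrt r) ≤ u r :=
        le_trans (Real.exp_le_exp.2 hlog) (le_of_eq (Real.exp_log (hpos r hr.le)))
      rw [Real.rpow_def_of_pos hr, le_div_iff₀ (Real.exp_pos _), ← Real.exp_add]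
      refine le_trans (Real.exp_le_exp.2 ?_) hur
      have hlr : Real.log r = 2 * Real.log (Real.sqrt r) := by
        rw [Real.log_sqrt hr.le]; ring
      have := log_ineq hs hB0 hn
      rw [hlr]; linarith
  -- eventual bound for the first branch
  have ha : ∀ᶠ n : ℕ in atTop, C' ^ n ≤ (m / R ^ n) * ((n.factorial : ℝ)) ^ 2 := by
    have hfac1 : ∀ᶠ n : ℕ in atTop, ((C'*R) ^ n / (n.factorial : ℝ)) < 1 :=
      (FloorSemiring.tendsto_pow_div_factorial_atTop (C'*R)).eventually
        (gt_mem_nhds one_pos)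
    filter_upwards [hfac1, eventually_ge_atTop ⌈1/m⌉₊] with n h1 h2
    have hnf : (0:ℝ) < (n.factorial : ℝ) := by exact_mod_cast n.factorial_pos
    have h1' : (C'*R) ^ n ≤ (n.factorial : ℝ) := by
      rw [div_lt_one hnf] at h1; exact h1.le
    have h2' : 1/m ≤ (n.factorial : ℝ) := by
      calc 1/m ≤ (⌈1/m⌉₊ : ℝ) := Nat.le_ceil _
        _ ≤ (n : ℝ) := by exact_mod_cast h2
        _ ≤ (n.factorial : ℝ) := by exact_mod_cast n.self_le_factorial
    have hfq : (1:ℝ) ≤ m * (n.factorial : ℝ) := by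
      rw [div_le_iff₀ hm] at h2'; linarith [h2']
    rw [div_mul_eq_mul_div, le_div_iff₀ (pow_pos hR0 n), ← mul_pow]
    calc (C'*R) ^ n ≤ (n.factorial : ℝ) := h1'
      _ = 1 * (n.factorial : ℝ) := (one_mul _).symm
      _ ≤ (m * (n.factorial : ℝ)) * (n.factorial : ℝ) :=
          mul_le_mul_of_nonneg_right hfq hnf.le
      _ = m * ((n.factorial : ℝ)) ^ 2 := by ring
  -- bound for the second branch (valid for all n ≥ 1)
  have hb : ∀ n : ℕ, 1 ≤ n →
      C' ^ n ≤ Real.exp (2*n - 2*n*(Real.log n - Real.log B)) * ((n.factorial : ℝ)) ^ 2 := by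
    intro n hn
    have hn' : (0:ℝ) < n := by exact_mod_cast hn
    have hnf : (0:ℝ) < (n.factorial : ℝ) := by exact_mod_cast n.factorial_pos
    have hstir : Real.exp (n * Real.log n - n) ≤ (n.factorial : ℝ) := by
      have h := Real.pow_div_factorial_le_exp (x := (n:ℝ)) (le_of_lt hn') n
      rw [div_le_iff₀ hnf] at h
      have hnn : (n:ℝ) ^ n = Real.exp (n * Real.log n) := by
        rw [← Real.log_pow, Real.exp_log (pow_pos hn' n)]
      rw [hnn] at h
      rw [Real.exp_sub, div_le_iff₀ (Real.exp_pos _)]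
      linarith [h]
    have hstir2 : Real.exp (2*(n * Real.log n - n)) ≤ ((n.factorial : ℝ)) ^ 2 := by
      have := pow_le_pow_left₀ (Real.exp_pos _).le hstir 2
      calc Real.exp (2*(n * Real.log n - n))
          = (Real.exp (n * Real.log n - n)) ^ 2 := by
            rw [sq, ← Real.exp_add]; ring_nf
        _ ≤ ((n.factorial : ℝ)) ^ 2 := this
    have hlogC' : Real.log C' = 2 * Real.log B := by
      rw [← hBB, Real.log_pow]; norm_num
    calc C' ^ n = Real.exp (Real.log C' * n) := by
          rw [← Real.rpow_natCast C' n, Real.rpow_def_of_pos hC0]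
      _ = Real.exp (2*n - 2*n*(Real.log n - Real.log B)) *
            Real.exp (2*(n * Real.log n - n)) := by
          rw [← Real.exp_add]; congr 1; rw [hlogC']; ring
      _ ≤ Real.exp (2*n - 2*n*(Real.log n - Real.log B)) * ((n.factorial : ℝ)) ^ 2 :=
          mul_le_mul_of_nonneg_left hstir2 (Real.exp_pos _).le
  filter_upwards [ha, eventually_ge_atTop 1] with n han hn1
  have hCC' : C ^ n ≤ C' ^ n :=
    calc C ^ n ≤ |C ^ n| := le_abs_self _
      _ = |C| ^ n := abs_pow C n
      _ ≤ C' ^ n := pow_le_pow_left₀ (abs_nonneg C) (le_max_left _ _) n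
  refine le_trans hCC' ?_
  have hmin : C' ^ n ≤ min (m / R ^ n)
      (Real.exp (2*n - 2*n*(Real.log n - Real.log B))) * ((n.factorial : ℝ)) ^ 2 := by
    rcases min_cases (m / R ^ n) (Real.exp (2*n - 2*n*(Real.log n - Real.log B))) with
      ⟨hmeq, _⟩ | ⟨hmeq, _⟩ <;> rw [hmeq]
    · exact han
    · exact hb n hn1
  exact le_trans hmin (mul_le_mul_of_nonneg_right (hell n hn1) (sq_nonneg _))

theorem Lsharp_entire (u : ℝ → ℝ)
    (hpos : ∀ r ≥ 0, 0 < u r)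
    (hcont : ContinuousOn u (Set.Ici 0))
    (hlim : Filter.Tendsto (fun r => Real.log (u r) / Real.sqrt r)
      Filter.atTop Filter.atTop)
    (hconv : ConvexOn ℝ (Set.Ici 0) (fun x : ℝ => Real.log (u (x ^ 2)))) :
    Filter.Tendsto
      (fun n : ℕ => (1 / (ell u n * ((n.factorial : ℝ)) ^ 2)) ^ (1 / (n : ℝ)))
      Filter.atTop (nhds 0) ∧
    ∀ r : ℝ, Summable (fun n : ℕ => r ^ n / (ell u n * ((n.factorial : ℝ)) ^ 2)) := by
  have key := fun C => key_bound u hpos hcont hlim C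
  constructor
  · rw [Metric.tendsto_atTop]
    intro ε hε
    obtain ⟨N₁, hN₁⟩ := eventually_atTop.1 (key (2/ε))
    refine ⟨max N₁ 1, fun n hn => ?_⟩
    have hn1 : 1 ≤ n := le_trans (le_max_right _ _) hn
    have hn0 : ((n:ℝ)) ≠ 0 := Nat.cast_ne_zero.2 (by omega)
    have hC : (0:ℝ) < 2/ε := by positivity
    have hD : (2/ε)^n ≤ ell u n * ((n.factorial : ℝ)) ^ 2 := hN₁ n (le_trans (le_max_left _ _) hn)
    have hDpos : 0 < ell u n * ((n.factorial : ℝ)) ^ 2 := lt_of_lt_of_le (pow_pos hC n) hD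
    have h1 : 1 / (ell u n * ((n.factorial : ℝ)) ^ 2) ≤ (ε/2)^n := by
      rw [div_le_iff₀ hDpos]
      calc (1:ℝ) = ((ε/2)*(2/ε))^n := by
            rw [show (ε/2)*(2/ε) = 1 by field_simp, one_pow]
        _ = (ε/2)^n * (2/ε)^n := mul_pow _ _ _
        _ ≤ (ε/2)^n * (ell u n * ((n.factorial : ℝ)) ^ 2) :=
            mul_le_mul_of_nonneg_left hD (by positivity)
    have h2 : (1 / (ell u n * ((n.factorial : ℝ)) ^ 2)) ^ (1/(n:ℝ))
        ≤ ((ε/2)^n : ℝ) ^ (1/(n:ℝ)) :=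
      Real.rpow_le_rpow (one_div_nonneg.2 hDpos.le) h1 (by positivity)
    have h3 : ((ε/2)^n : ℝ) ^ (1/(n:ℝ)) = ε/2 := by
      rw [← Real.rpow_natCast (ε/2) n, ← Real.rpow_mul (by positivity),
        mul_one_div, div_self hn0, Real.rpow_one]
    rw [Real.dist_eq, sub_zero,
      abs_of_nonneg (Real.rpow_nonneg (one_div_nonneg.2 hDpos.le) _)]
    rw [h3] at h2
    linarith
  · intro r
    obtain ⟨N, hN⟩ := eventually_atTop.1 (key (2*(|r|+1)))
    have hC : (0:ℝ) < 2*(|r|+1) := by positivity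
    apply Summable.of_norm_bounded_eventually (g := fun n : ℕ => (1/2 : ℝ)^n)
      (summable_geometric_of_lt_one (by norm_num) (by norm_num))
    rw [Nat.cofinite_eq_atTop]
    filter_upwards [eventually_ge_atTop N] with n hn
    have hD := hN n hn
    have hDpos : 0 < ell u n * ((n.factorial : ℝ)) ^ 2 := lt_of_lt_of_le (pow_pos hC n) hD
    rw [Real.norm_eq_abs, abs_div, abs_pow, abs_of_pos hDpos, div_le_iff₀ hDpos]
    calc |r| ^ n ≤ (|r|+1)^n := pow_le_pow_left₀ (abs_nonneg r) (by linarith) n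
      _ = ((1/2) * (2*(|r|+1)))^n := by ring_nf
      _ = (1/2 : ℝ)^n * (2*(|r|+1))^n := mul_pow _ _ _
      _ ≤ (1/2 : ℝ)^n * (ell u n * ((n.factorial : ℝ)) ^ 2) :=
          mul_le_mul_of_nonneg_left hD (by positivity)
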